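/- Let x ∈ ℝ and let u : ℝ → ℝ be twice continuously differentiable on a neighborhood of x. Then lim_{δ→0⁺} δ^{-2} ∫_{x−δ}^{x+δ} (u(y) − u(x)) / |y − x| dy = u''(x) / 2. -/

import Mathlib

open MeasureTheory intervalIntegral Set Filter Topology Interval

lemma aux_abs_integral (x δ : ℝ) (hδ : 0 < δ) :
    ∫ y in (x - δ)..(x + δ), |y - x| = δ ^ 2 := by
  have hc : Continuous fun y : ℝ => |y - x| :=
    continuous_abs.comp (continuous_id.sub continuous_const)
  rw [← integral_add_adjacent_intervals (b := x) (hc.intervalIntegrable _ _)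
    (hc.intervalIntegrable _ _)]
  have e1 : ∫ y in (x - δ)..x, |y - x| = ∫ y in (x - δ)..x, (x - y) := by
    apply integral_congr
    intro y hy
    rw [uIcc_of_le (by linarith)] at hy
    show |y - x| = x - y
    rw [abs_of_nonpos (by linarith [hy.2] : y - x ≤ 0), neg_sub]
  have e2 : ∫ y in x..(x + δ), |y - x| = ∫ y in x..(x + δ), (y - x) := by
    apply integral_congr
    intro y hy
    rw [uIcc_of_le (by linarith)] at hy
    show |y - x| = y - x
    exact abs_of_nonneg (by linarith [hy.1])
  rw [e1, e2, integral_sub intervalIntegrable_const intervalIntegrable_id,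
    integral_sub intervalIntegrable_id intervalIntegrable_const]
  simp [integral_id, intervalIntegral.integral_const, smul_eq_mul]
  ring

lemma aux_sign_int (x δ c : ℝ) (hδ : 0 < δ) :
    IntervalIntegrable (fun y => c * (y - x) / |y - x|) volume (x - δ) (x + δ) ∧
      ∫ y in (x - δ)..(x + δ), c * (y - x) / |y - x| = 0 := by
  have hne : ∀ᵐ y : ℝ, y ≠ x := by
    rw [ae_iff]
    simp only [ne_eq, not_not]
    exact measure_singleton x
  -- right part
  have hRval : ∀ y ∈ Ioc x (x + δ), c * (y - x) / |y - x| = c := by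
    intro y hy
    have h1 : (0:ℝ) < y - x := by linarith [hy.1]
    rw [abs_of_pos h1, mul_div_assoc, div_self h1.ne', mul_one]
  have hRint : IntervalIntegrable (fun y => c * (y - x) / |y - x|) volume x (x + δ) := by
    rw [intervalIntegrable_iff, uIoc_of_le (by linarith)]
    exact ((integrableOn_const (C := c) measure_Ioc_lt_top.ne)).congr_fun
      (fun y hy => (hRval y hy).symm) measurableSet_Ioc
  have hRI : ∫ y in x..(x + δ), c * (y - x) / |y - x| = c * δ := by
    rw [intervalIntegral.integral_congr_ae (g := fun _ => c) ?_]
    · simp [mul_comm]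
    · filter_upwards with y hy
      rw [uIoc_of_le (by linarith)] at hy
      exact hRval y hy
  -- left part
  have hLval : ∀ y, y ≠ x → y ∈ Ioc (x - δ) x → c * (y - x) / |y - x| = -c := by
    intro y hy hmem
    have h1 : y - x < 0 := by
      rcases lt_or_eq_of_le hmem.2 with h | h
      · linarith
      · exact absurd h hy
    rw [abs_of_neg h1, div_neg, mul_div_assoc, div_self h1.ne, mul_one]
  have hLint : IntervalIntegrable (fun y => c * (y - x) / |y - x|) volume (x - δ) x := by
    rw [intervalIntegrable_iff, uIoc_of_le (by linarith)]
    refine ((integrableOn_const (C := -c) measure_Ioc_lt_top.ne)).congr ?_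
    filter_upwards [ae_restrict_mem measurableSet_Ioc, ae_restrict_of_ae hne] with y hmem hy
    exact (hLval y hy hmem).symm
  have hLI : ∫ y in (x - δ)..x, c * (y - x) / |y - x| = -(c * δ) := by
    rw [intervalIntegral.integral_congr_ae (g := fun _ => -c) ?_]
    · simp; ring
    · filter_upwards [hne] with y hy hmem
      rw [uIoc_of_le (by linarith)] at hmem
      exact hLval y hy hmem
  refine ⟨hLint.trans hRint, ?_⟩
  rw [← integral_add_adjacent_intervals hLint hRint, hRI, hLI]
  ring

lemma aux_taylor (x : ℝ) (u : ℝ → ℝ) {r₀ ε : ℝ} (hr₀ : 0 < r₀) (hε : 0 < ε)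
    (hdiff : ∀ y ∈ Metric.closedBall x r₀, HasDerivAt u (deriv u y) y)
    (hb : HasDerivAt (deriv u) (deriv (deriv u) x) x) :
    ∃ r, 0 < r ∧ r ≤ r₀ ∧ ∀ y, |y - x| ≤ r →
      |u y - u x - deriv u x * (y - x) - deriv (deriv u) x / 2 * (y - x) ^ 2|
        ≤ ε * (y - x) ^ 2 := by
  set a := deriv u x with ha
  set b := deriv (deriv u) x with hbdef
  have h1 := Asymptotics.isLittleO_iff.1 (hasDerivAt_iff_isLittleO.1 hb) hε
  rw [Metric.eventually_nhds_iff] at h1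
  obtain ⟨r₁, hr₁, hbound⟩ := h1
  refine ⟨min (r₁ / 2) r₀, by positivity, min_le_right _ _, fun y hy => ?_⟩
  have hyr₁ : |y - x| < r₁ := lt_of_le_of_lt (hy.trans (min_le_left _ _)) (by linarith)
  have hyr₀ : |y - x| ≤ r₀ := hy.trans (min_le_right _ _)
  have hsub : ∀ z ∈ uIcc x y, |z - x| ≤ |y - x| := by
    intro z hz
    rcases le_total x y with h | h
    · rw [uIcc_of_le h] at hz
      rw [abs_of_nonneg (by linarith [hz.1]), abs_of_nonneg (by linarith : (0:ℝ) ≤ y - x)]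
      linarith [hz.2]
    · rw [uIcc_of_ge h] at hz
      rw [abs_of_nonpos (by linarith [hz.2] : z - x ≤ 0),
        abs_of_nonpos (by linarith : y - x ≤ 0)]
      linarith [hz.1]
  have hg : ∀ z ∈ uIcc x y, HasDerivWithinAt
      (fun w => u w - u x - a * (w - x) - b / 2 * (w - x) ^ 2)
      (deriv u z - a - b * (z - x)) (uIcc x y) z := by
    intro z hz
    have hz0 : z ∈ Metric.closedBall x r₀ := by
      rw [Metric.mem_closedBall, Real.dist_eq]
      exact (hsub z hz).trans hyr₀
    have h2 : HasDerivAt (fun w => a * (w - x)) a z := by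
      simpa using ((hasDerivAt_id z).sub_const x).const_mul a
    have h3 : HasDerivAt (fun w => b / 2 * (w - x) ^ 2) (b * (z - x)) z := by
      have h4 := (((hasDerivAt_id z).sub_const x).pow 2).const_mul (b / 2)
      refine h4.congr_deriv ?_
      simp
      ring
    exact ((((hdiff z hz0).sub_const (u x)).sub h2).sub h3).hasDerivWithinAt
  have hbd : ∀ z ∈ uIcc x y, ‖deriv u z - a - b * (z - x)‖ ≤ ε * |y - x| := by
    intro z hz
    have hz1 : dist z x < r₁ := by
      rw [Real.dist_eq]; exact lt_of_le_of_lt (hsub z hz) hyr₁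
    have h5 := hbound hz1
    rw [smul_eq_mul, Real.norm_eq_abs, Real.norm_eq_abs] at h5
    have e : deriv u z - a - b * (z - x) = deriv u z - a - (z - x) * b := by ring
    rw [Real.norm_eq_abs, e]
    exact h5.trans (mul_le_mul_of_nonneg_left (hsub z hz) hε.le)
  have key := (convex_uIcc x y).norm_image_sub_le_of_norm_hasDerivWithin_le hg hbd
    left_mem_uIcc right_mem_uIcc
  have hgx : u x - u x - a * (x - x) - b / 2 * (x - x) ^ 2 = 0 := by ring
  rw [hgx, sub_zero, Real.norm_eq_abs, Real.norm_eq_abs] at key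
  calc |u y - u x - a * (y - x) - b / 2 * (y - x) ^ 2| ≤ ε * |y - x| * |y - x| := key
    _ = ε * (y - x) ^ 2 := by rw [mul_assoc, abs_mul_abs_self, ← pow_two]

theorem stmt_3 (x : ℝ) (u : ℝ → ℝ)
    (s : Set ℝ) (hs : s ∈ nhds x) (hu : ContDiffOn ℝ 2 u s) :
    Filter.Tendsto
      (fun δ : ℝ => (δ ^ 2)⁻¹ * ∫ y in (x - δ)..(x + δ), (u y - u x) / |y - x|)
      (nhdsWithin 0 (Set.Ioi 0))
      (nhds (deriv (deriv u) x / 2)) := by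
  have hxmem : x ∈ interior s := mem_interior_iff_mem_nhds.2 hs
  obtain ⟨r₀, hr₀pos, hball⟩ : ∃ r₀ > 0, Metric.closedBall x r₀ ⊆ interior s := by
    obtain ⟨t, htpos, ht⟩ := Metric.mem_nhds_iff.1 (isOpen_interior.mem_nhds hxmem)
    exact ⟨t / 2, by positivity, fun z hz =>
      ht (lt_of_le_of_lt (Metric.mem_closedBall.1 hz) (by linarith))⟩
  set a := deriv u x with ha
  set b := deriv (deriv u) x with hbdef
  have hds : DifferentiableOn ℝ u s := hu.differentiableOn (by norm_num)
  have hdiff : ∀ y ∈ Metric.closedBall x r₀, HasDerivAt u (deriv u y) y := by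
    intro y hy
    exact ((hds y (interior_subset (hball hy))).differentiableAt
      (Filter.mem_of_superset (isOpen_interior.mem_nhds (hball hy)) interior_subset)).hasDerivAt
  have hb : HasDerivAt (deriv u) b x := by
    have h1 : ContDiffOn ℝ 1 (deriv u) (interior s) :=
      (hu.mono interior_subset).deriv_of_isOpen isOpen_interior (by norm_num)
    have h2 : DifferentiableOn ℝ (deriv u) (interior s) := h1.differentiableOn one_ne_zero
    exact ((h2 x hxmem).differentiableAt (isOpen_interior.mem_nhds hxmem)).hasDerivAt
  rw [Metric.tendsto_nhds]
  intro ε hε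
  obtain ⟨r, hrpos, hrr₀, hr⟩ := aux_taylor x u hr₀pos (by positivity : (0:ℝ) < ε / 4) hdiff hb
  set C := |a| + (|b| / 2 + ε / 4) * r with hC
  have hCnn : 0 ≤ C := by positivity
  filter_upwards [Ioo_mem_nhdsGT_of_mem ⟨le_refl (0:ℝ), hrpos⟩] with δ hδ
  obtain ⟨hδpos, hδr⟩ := hδ
  have hle : x - δ ≤ x + δ := by linarith
  have hIoc : Ι (x - δ) (x + δ) = Ioc (x - δ) (x + δ) := uIoc_of_le hle
  have hmem_le : ∀ y ∈ Ι (x - δ) (x + δ), |y - x| ≤ r := by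
    intro y hy
    rw [hIoc] at hy
    rw [abs_le]
    constructor <;> [linarith [hy.1]; linarith [hy.2] ]
  -- bound on |u y - u x|
  have hub : ∀ y, |y - x| ≤ r → |u y - u x| ≤ C * |y - x| := by
    intro y hy
    have htay := hr y hy
    rw [← ha, ← hbdef] at htay
    have e : u y - u x = (a * (y - x) + b / 2 * (y - x) ^ 2) +
        (u y - u x - a * (y - x) - b / 2 * (y - x) ^ 2) := by ring
    have h6 : |u y - u x| ≤ |a * (y - x)| + |b / 2 * (y - x) ^ 2| +
        |u y - u x - a * (y - x) - b / 2 * (y - x) ^ 2| := by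
      have h6' := (abs_add_le (a * (y - x) + b / 2 * (y - x) ^ 2)
        (u y - u x - a * (y - x) - b / 2 * (y - x) ^ 2)).trans
        (add_le_add_left (abs_add_le (a * (y - x)) (b / 2 * (y - x) ^ 2)) _)
      have e' : a * (y - x) + b / 2 * (y - x) ^ 2 +
          (u y - u x - a * (y - x) - b / 2 * (y - x) ^ 2) = u y - u x := by ring
      rwa [e'] at h6'
    have h7 : (y - x) ^ 2 ≤ r * |y - x| := by
      have : (y - x) ^ 2 = |y - x| * |y - x| := by rw [abs_mul_abs_self, ← pow_two]
      rw [this]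
      exact mul_le_mul_of_nonneg_right hy (abs_nonneg _)
    have h8 : |a * (y - x)| = |a| * |y - x| := abs_mul _ _
    have h9 : |b / 2 * (y - x) ^ 2| ≤ |b| / 2 * (r * |y - x|) := by
      rw [abs_mul]
      have : |(y - x) ^ 2| = (y - x) ^ 2 := abs_of_nonneg (sq_nonneg _)
      rw [this, abs_div]
      gcongr
      simp
    have h10 : |u y - u x - a * (y - x) - b / 2 * (y - x) ^ 2| ≤ ε / 4 * (r * |y - x|) := by
      refine htay.trans ?_
      have h7' : 0 ≤ ε / 4 := by positivity
      nlinarith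
    rw [hC]
    nlinarith [abs_nonneg (y - x)]
  -- integrability of the integrand
  have hcont_u : ContinuousOn (fun y => u y - u x) (Ι (x - δ) (x + δ)) := by
    apply (hu.continuousOn.sub continuousOn_const).mono
    intro y hy
    apply interior_subset
    apply hball
    rw [Metric.mem_closedBall, Real.dist_eq]
    exact (hmem_le y hy).trans hrr₀
  have hf_int : IntervalIntegrable (fun y => (u y - u x) / |y - x|) volume (x - δ) (x + δ) := by
    apply IntervalIntegrable.mono_fun' (g := fun _ => C) intervalIntegrable_const
    · have e : (fun y => (u y - u x) / |y - x|) = fun y => (u y - u x) * |y - x|⁻¹ :=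
        funext fun y => div_eq_mul_inv _ _
      rw [e]
      exact (hcont_u.aestronglyMeasurable (hIoc ▸ measurableSet_Ioc)).mul
        ((measurable_id.sub_const x).abs.inv.aestronglyMeasurable.restrict)
    · filter_upwards [ae_restrict_mem (hIoc ▸ measurableSet_Ioc)] with y hy
      rcases eq_or_ne y x with h | h
      · simp [h, hCnn]
      · have habs : 0 < |y - x| := abs_pos.2 (sub_ne_zero.2 h)
        rw [Real.norm_eq_abs, abs_div, abs_abs, div_le_iff₀ habs]
        exact hub y (hmem_le y hy)
  -- decomposition
  obtain ⟨h1int, h1val⟩ := aux_sign_int x δ a hδpos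
  have h2cont : Continuous (fun y : ℝ => b / 2 * |y - x|) :=
    continuous_const.mul (continuous_abs.comp (continuous_id.sub continuous_const))
  have h2int : IntervalIntegrable (fun y : ℝ => b / 2 * |y - x|) volume (x - δ) (x + δ) :=
    h2cont.intervalIntegrable _ _
  have h2val : ∫ y in (x - δ)..(x + δ), b / 2 * |y - x| = b / 2 * δ ^ 2 := by
    rw [intervalIntegral.integral_const_mul, aux_abs_integral x δ hδpos]
  have hptw : ∀ y : ℝ, (u y - u x) / |y - x| = (a * (y - x) / |y - x| + b / 2 * |y - x|) +
      (u y - u x - a * (y - x) - b / 2 * (y - x) ^ 2) / |y - x| := by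
    intro y
    rcases eq_or_ne y x with h | h
    · simp [h]
    · have hyx : |y - x| ≠ 0 := abs_ne_zero.2 (sub_ne_zero.2 h)
      have e2 : b / 2 * |y - x| = b / 2 * (y - x) ^ 2 / |y - x| := by
        rw [eq_div_iff hyx, mul_assoc, abs_mul_abs_self, ← pow_two]
      rw [e2, ← add_div, ← add_div]
      congr 1
      ring
  have h3int : IntervalIntegrable
      (fun y => (u y - u x - a * (y - x) - b / 2 * (y - x) ^ 2) / |y - x|)
      volume (x - δ) (x + δ) := by
    have e : (fun y => (u y - u x) / |y - x| - (a * (y - x) / |y - x| + b / 2 * |y - x|)) =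
        fun y => (u y - u x - a * (y - x) - b / 2 * (y - x) ^ 2) / |y - x| :=
      funext fun y => by rw [hptw y]; ring
    exact e ▸ hf_int.sub (h1int.add h2int)
  have hIval : ∫ y in (x - δ)..(x + δ), (u y - u x) / |y - x| = b / 2 * δ ^ 2 +
      ∫ y in (x - δ)..(x + δ), (u y - u x - a * (y - x) - b / 2 * (y - x) ^ 2) / |y - x| := by
    calc ∫ y in (x - δ)..(x + δ), (u y - u x) / |y - x|
        = ∫ y in (x - δ)..(x + δ), ((a * (y - x) / |y - x| + b / 2 * |y - x|) +
            (u y - u x - a * (y - x) - b / 2 * (y - x) ^ 2) / |y - x|) :=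
          integral_congr fun y _ => hptw y
      _ = (∫ y in (x - δ)..(x + δ), (a * (y - x) / |y - x| + b / 2 * |y - x|)) +
          ∫ y in (x - δ)..(x + δ), (u y - u x - a * (y - x) - b / 2 * (y - x) ^ 2) / |y - x| :=
          integral_add (h1int.add h2int) h3int
      _ = _ := by rw [integral_add h1int h2int, h1val, h2val]; ring
  -- error bound
  have hEbound : abs (∫ y in (x - δ)..(x + δ),
      (u y - u x - a * (y - x) - b / 2 * (y - x) ^ 2) / |y - x|) ≤ ε / 4 * δ ^ 2 := by
    have hgc : Continuous (fun y : ℝ => ε / 4 * |y - x|) :=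
      continuous_const.mul (continuous_abs.comp (continuous_id.sub continuous_const))
    have h11 := norm_integral_le_abs_of_norm_le (μ := volume) (a := x - δ) (b := x + δ)
      (f := fun y => (u y - u x - a * (y - x) - b / 2 * (y - x) ^ 2) / |y - x|)
      (g := fun y => ε / 4 * |y - x|) ?_ (hgc.intervalIntegrable _ _)
    · have h12 : ∫ y in (x - δ)..(x + δ), ε / 4 * |y - x| = ε / 4 * δ ^ 2 := by
        rw [intervalIntegral.integral_const_mul, aux_abs_integral x δ hδpos]
      rw [h12, abs_of_nonneg (by positivity)] at h11
      exact h11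
    · filter_upwards [ae_restrict_mem (hIoc ▸ measurableSet_Ioc)] with y hy
      rcases eq_or_ne y x with h | h
      · simp [h]
      · have habs : 0 < |y - x| := abs_pos.2 (sub_ne_zero.2 h)
        rw [Real.norm_eq_abs, abs_div, abs_abs, div_le_iff₀ habs]
        have htay := hr y (hmem_le y hy)
        rw [← ha, ← hbdef] at htay
        have e : ε / 4 * (y - x) ^ 2 = ε / 4 * |y - x| * |y - x| := by
          rw [mul_assoc, abs_mul_abs_self, ← pow_two]
        linarith [e ▸ htay]
  -- conclusion
  set E := ∫ y in (x - δ)..(x + δ),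
    (u y - u x - a * (y - x) - b / 2 * (y - x) ^ 2) / |y - x| with hE
  have hδ2 : (0:ℝ) < δ ^ 2 := by positivity
  rw [Real.dist_eq, hIval]
  have e3 : (δ ^ 2)⁻¹ * (b / 2 * δ ^ 2 + E) - b / 2 = E / δ ^ 2 := by
    field_simp
    ring
  rw [e3, abs_div, abs_of_pos hδ2]
  calc |E| / δ ^ 2 ≤ ε / 4 * δ ^ 2 / δ ^ 2 := by gcongr
    _ = ε / 4 := by field_simp
    _ < ε := by linarith
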